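/- If $a_1, \ldots, a_r$ are distinct monomials of degree $\le d$ in $k[x_0,\ldots,x_{n-1}]$, none equal to a pure power $x_i^d$, such that $a_j$ does not divide $a_i$ for all $i > j$, then the dimensions $\dim_k k[x_0,\ldots,x_{n-1}]/((x_0^d,\ldots,x_{n-1}^d) + (a_1,\ldots,a_j))$ are strictly decreasing in $j$ for $j = 0, 1, \ldots, r$. -/

import Mathlib

open MvPolynomial


lemma aux_fd (n d : ℕ) (k : Type*) [Field k] (S : Set (Fin n →₀ ℕ))
    (hS : ∀ i : Fin n, Finsupp.single i d ∈ S) :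
    FiniteDimensional k
      (MvPolynomial (Fin n) k ⧸ Ideal.span ((fun s => monomial s (1 : k)) '' S)) := by
  set I : Ideal (MvPolynomial (Fin n) k) := Ideal.span ((fun s => monomial s (1 : k)) '' S)
    with hI
  set B : Set (MvPolynomial (Fin n) k ⧸ I) :=
    Set.range (fun f : Fin n → Fin d =>
      Ideal.Quotient.mkₐ k I (monomial (Finsupp.equivFunOnFinite.symm fun i => ((f i : ℕ))) 1))
    with hB
  have hspan : Submodule.span k B = ⊤ := by
    rw [Submodule.eq_top_iff']
    intro x
    obtain ⟨p, rfl⟩ := Ideal.Quotient.mkₐ_surjective k I x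
    rw [MvPolynomial.as_sum p, map_sum]
    apply Submodule.sum_mem
    intro v hv
    by_cases hvd : ∀ i, v i < d
    · have h1 : monomial v (coeff v p) = (coeff v p) • monomial v (1 : k) := by
        rw [smul_monomial, smul_eq_mul, mul_one]
      rw [h1, map_smul]
      refine Submodule.smul_mem _ _ (Submodule.subset_span ?_)
      refine ⟨fun i => ⟨v i, hvd i⟩, ?_⟩
      show Ideal.Quotient.mkₐ k I (monomial (Finsupp.equivFunOnFinite.symm fun i =>
        ((⟨v i, hvd i⟩ : Fin d) : ℕ)) 1) = _
      congr 2
      have h2 : (fun i => ((⟨v i, hvd i⟩ : Fin d) : ℕ)) = ⇑v := rfl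
      rw [h2, Finsupp.equivFunOnFinite_symm_coe]
    · push_neg at hvd
      obtain ⟨i, hi⟩ := hvd
      have hm : monomial v (coeff v p) ∈ I := by
        rw [hI]
        refine mem_ideal_span_monomial_image.mpr ?_
        intro xi hxi
        have hxv : xi = v := by
          have := MvPolynomial.support_monomial_subset hxi
          simpa using this
        exact ⟨Finsupp.single i d, hS i, hxv ▸ Finsupp.single_le_iff.mpr hi⟩
      have : Ideal.Quotient.mkₐ k I (monomial v (coeff v p)) = 0 :=
        Ideal.Quotient.eq_zero_iff_mem.mpr hm
      rw [this]; exact zero_mem _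
  constructor
  exact Submodule.fg_def.mpr ⟨B, Set.finite_range _, hspan⟩


theorem stmt_11 (n d r : ℕ) (k : Type*) [Field k] (hn : 1 ≤ n) (hd : 1 ≤ d)
    (a : Fin r → (Fin n → ℕ)) (hinj : Function.Injective a)
    (hdeg : ∀ j, (∑ i, a j i) ≤ d)
    (hpp : ∀ j i₀, a j ≠ fun i => if i = i₀ then d else 0)
    (hdiv : ∀ i j, j < i → ¬ (∀ t, a j t ≤ a i t)) :
    StrictAnti (fun j : Fin (r + 1) =>
      Module.finrank k (MvPolynomial (Fin n) k ⧸
        Ideal.span ((Set.range fun i : Fin n => (X i : MvPolynomial (Fin n) k) ^ d) ∪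
          ((fun t : Fin r => monomial (Finsupp.equivFunOnFinite.symm (a t)) (1 : k)) ''
            {t : Fin r | (t : ℕ) < (j : ℕ)})))) := by
  -- describe the generating set as an image of exponent sets
  set S : ℕ → Set (Fin n →₀ ℕ) := fun m =>
    (Set.range fun i : Fin n => Finsupp.single i d) ∪
      ((fun t : Fin r => Finsupp.equivFunOnFinite.symm (a t)) '' {t : Fin r | (t : ℕ) < m})
    with hS
  have hgen : ∀ m : ℕ,
      ((Set.range fun i : Fin n => (X i : MvPolynomial (Fin n) k) ^ d) ∪
        ((fun t : Fin r => monomial (Finsupp.equivFunOnFinite.symm (a t)) (1 : k)) ''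
          {t : Fin r | (t : ℕ) < m})) = (fun s => monomial s (1 : k)) '' S m := by
    intro m
    rw [hS, Set.image_union, ← Set.range_comp, ← Set.image_comp]
    congr 1
    ext q
    simp only [Set.mem_range, Function.comp_apply, X_pow_eq_monomial]
  have hsingle : ∀ m, ∀ i : Fin n, Finsupp.single i d ∈ S m :=
    fun m i => Set.mem_union_left _ ⟨i, rfl⟩
  -- the exponent vector of each aⱼ is < d in each coordinate
  have hlt : ∀ j : Fin r, ∀ i, a j i < d := by
    intro j i
    rcases lt_or_ge (a j i) d with h | h
    · exact h
    have hsum := hdeg j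
    have h1 : a j i ≤ ∑ i', a j i' := Finset.single_le_sum (fun _ _ => Nat.zero_le _)
      (Finset.mem_univ i)
    have hEq : a j i = d := le_antisymm (le_trans h1 hsum) h
    exfalso
    apply hpp j i
    funext i'
    by_cases hii : i' = i
    · simp [hii, hEq]
    · simp only [hii, if_false]
      by_contra hne
      have hpos : 0 < a j i' := Nat.pos_of_ne_zero hne
      have : d < ∑ i'', a j i'' := by
        have := Finset.add_sum_erase Finset.univ (a j) (Finset.mem_univ i)
        rw [← this]
        have h2 : a j i' ≤ ∑ i'' ∈ Finset.univ.erase i, a j i'' :=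
          Finset.single_le_sum (fun _ _ => Nat.zero_le _)
            (Finset.mem_erase.mpr ⟨hii, Finset.mem_univ i'⟩)
        omega
      omega
  rw [Fin.strictAnti_iff_succ_lt]
  intro j
  show Module.finrank k _ < Module.finrank k _
  rw [hgen, hgen, Fin.coe_castSucc, Fin.val_succ]
  set R := MvPolynomial (Fin n) k
  set I₁ : Ideal R := Ideal.span ((fun s => monomial s (1 : k)) '' S (j : ℕ)) with hI₁
  set I₂ : Ideal R := Ideal.span ((fun s => monomial s (1 : k)) '' S ((j : ℕ) + 1)) with hI₂
  have hle : I₁ ≤ I₂ := by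
    apply Ideal.span_mono
    apply Set.image_mono
    apply Set.union_subset_union_right
    apply Set.image_mono
    intro t ht
    exact Nat.lt_succ_of_lt ht
  haveI hfd1 : FiniteDimensional k (R ⧸ I₁) := aux_fd n d k _ (hsingle _)
  haveI hfd2 : FiniteDimensional k (R ⧸ I₂) := aux_fd n d k _ (hsingle _)
  -- the factor map as a k-linear map
  set φ : (R ⧸ I₁) →ₐ[k] (R ⧸ I₂) :=
    Ideal.Quotient.liftₐ I₁ (Ideal.Quotient.mkₐ k I₂)
      (fun x hx => Ideal.Quotient.eq_zero_iff_mem.mpr (hle hx)) with hφ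
  have hφmk : ∀ p : R, φ (Ideal.Quotient.mk I₁ p) = Ideal.Quotient.mk I₂ p := by
    intro p
    rw [hφ]
    rfl
  have hsurj : Function.Surjective φ := by
    intro x
    obtain ⟨p, rfl⟩ := Ideal.Quotient.mk_surjective x
    exact ⟨Ideal.Quotient.mk I₁ p, hφmk p⟩
  -- the kernel is nontrivial: the image of the monomial aⱼ
  set α : Fin n →₀ ℕ := Finsupp.equivFunOnFinite.symm (a j) with hα
  have hα_apply : ∀ i, α i = a j i := fun i => rfl
  have hmem2 : (monomial α (1 : k)) ∈ I₂ := by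
    apply Ideal.subset_span
    exact ⟨α, Set.mem_union_right _ ⟨j, by simp, rfl⟩, rfl⟩
  have hnmem1 : (monomial α (1 : k)) ∉ I₁ := by
    rw [hI₁]
    rw [mem_ideal_span_monomial_image]
    push_neg
    refine ⟨α, ?_, ?_⟩
    · classical
      rw [MvPolynomial.support_monomial, if_neg one_ne_zero]
      exact Finset.mem_singleton_self α
    · rintro s (⟨i, rfl⟩ | ⟨t, ht, rfl⟩)
      · intro hcon
        have := Finsupp.single_le_iff.mp hcon
        rw [hα_apply] at this
        exact absurd this (not_le.mpr (hlt j i))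
      · intro hcon
        refine hdiv j t ht fun i => ?_
        have := hcon i
        simpa [hα_apply] using this
  have hker : LinearMap.ker φ.toLinearMap ≠ ⊥ := by
    intro hbot
    have h0 : φ (Ideal.Quotient.mk I₁ (monomial α (1 : k))) = 0 := by
      rw [hφmk]; exact Ideal.Quotient.eq_zero_iff_mem.mpr hmem2
    have : Ideal.Quotient.mk I₁ (monomial α (1 : k)) = 0 := by
      have hm : Ideal.Quotient.mk I₁ (monomial α (1 : k)) ∈ LinearMap.ker φ.toLinearMap :=
        LinearMap.mem_ker.mpr h0
      rw [hbot, Submodule.mem_bot] at hm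
      exact hm
    exact hnmem1 (Ideal.Quotient.eq_zero_iff_mem.mp this)
  -- conclude via rank-nullity
  have hrn := LinearMap.finrank_range_add_finrank_ker φ.toLinearMap
  have hrange : LinearMap.range φ.toLinearMap = ⊤ := LinearMap.range_eq_top.mpr hsurj
  rw [hrange, finrank_top] at hrn
  have hkpos : 0 < Module.finrank k (LinearMap.ker φ.toLinearMap) := by
    rcases Nat.eq_zero_or_pos (Module.finrank k (LinearMap.ker φ.toLinearMap)) with h | h
    · exact absurd (Submodule.finrank_eq_zero.mp h) hker
    · exact h
  show Module.finrank k (R ⧸ I₂) < Module.finrank k (R ⧸ I₁)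
  omega
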